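/- Let T be an n×n real matrix (n ≥ 1) such that (1) every column sum of T is positive, and (2) there exists a positive integer k such that T^k is entrywise nonnegative and irreducible. Then there exists a nonzero row vector x ∈ ℝ^n with all entries nonnegative satisfying x T = ρ(T) x, where ρ(T) is the spectral radius of T. -/

import Mathlib

open Matrix Finset

namespace PFAux

variable {n : ℕ}

lemma pow_entry_nonneg (S : Matrix (Fin n) (Fin n) ℝ) (hS : ∀ i j, 0 ≤ S i j) :
    ∀ (m : ℕ) (i j : Fin n), 0 ≤ (S ^ m) i j := by
  intro m
  induction m with
  | zero => intro i j; simp [Matrix.one_apply]; split <;> norm_num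
  | succ m ih =>
      intro i j
      rw [pow_succ, Matrix.mul_apply]
      exact Finset.sum_nonneg fun l _ => mul_nonneg (ih i l) (hS l j)

lemma vecMul_entry_nonneg (S : Matrix (Fin n) (Fin n) ℝ) (hS : ∀ i j, 0 ≤ S i j)
    (x : Fin n → ℝ) (hx : ∀ i, 0 ≤ x i) (j : Fin n) : 0 ≤ (x ᵥ* S) j := by
  rw [Matrix.vecMul, dotProduct]
  exact Finset.sum_nonneg fun i _ => mul_nonneg (hx i) (hS i j)

lemma vecMul_pow_eigen {S : Matrix (Fin n) (Fin n) ℝ} {y : Fin n → ℝ} {r : ℝ}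
    (h : y ᵥ* S = r • y) : ∀ m : ℕ, y ᵥ* (S ^ m) = r ^ m • y := by
  intro m
  induction m with
  | zero => simp
  | succ m ih =>
      rw [pow_succ, ← Matrix.vecMul_vecMul, ih, Matrix.smul_vecMul, h, smul_smul, pow_succ]

end PFAux

namespace PFAux

lemma exists_pos_entry {u : Fin n → ℝ} (hu : ∀ i, 0 ≤ u i) (hune : u ≠ 0) :
    ∃ i, 0 < u i := by
  by_contra h
  push_neg at h
  exact hune (funext fun i => le_antisymm (h i) (hu i))

lemma eigen_pos {S : Matrix (Fin n) (Fin n) ℝ} (hS : ∀ i j, 0 ≤ S i j)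
    (hirr : ∀ i j, ∃ m : ℕ, 0 < m ∧ 0 < (S ^ m) i j)
    {u : Fin n → ℝ} {r : ℝ} (hr : 0 ≤ r) (hu : ∀ i, 0 ≤ u i) (hune : u ≠ 0)
    (heig : u ᵥ* S = r • u) : 0 < r ∧ ∀ j, 0 < u j := by
  obtain ⟨i, hi⟩ := exists_pos_entry hu hune
  have key : ∀ j, 0 < r ∧ 0 < u j := by
    intro j
    obtain ⟨m, hm, hSm⟩ := hirr i j
    have h1 : (u ᵥ* (S ^ m)) j = r ^ m * u j := by
      rw [vecMul_pow_eigen heig]; simp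
    have h2 : u i * (S ^ m) i j ≤ (u ᵥ* (S ^ m)) j := by
      rw [Matrix.vecMul, dotProduct]
      exact Finset.single_le_sum
        (fun l _ => mul_nonneg (hu l) (pow_entry_nonneg S hS m l j)) (Finset.mem_univ i)
    have h3 : 0 < r ^ m * u j := lt_of_lt_of_le (mul_pos hi hSm) (h1 ▸ h2)
    have hrm : 0 < r ^ m := by
      rcases (pow_nonneg hr m).lt_or_eq with h | h
      · exact h
      · exfalso; rw [← h] at h3; simp at h3
    have hrpos : 0 < r := by
      by_contra hc
      push_neg at hc
      have : r = 0 := le_antisymm hc hr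
      rw [this, zero_pow hm.ne'] at hrm; exact lt_irrefl 0 hrm
    have huj : 0 < u j := by nlinarith [hu j]
    exact ⟨hrpos, huj⟩
  exact ⟨(key i).1, fun j => (key j).2⟩

lemma simplicity (hn : 1 ≤ n) {S : Matrix (Fin n) (Fin n) ℝ} (hS : ∀ i j, 0 ≤ S i j)
    (hirr : ∀ i j, ∃ m : ℕ, 0 < m ∧ 0 < (S ^ m) i j)
    {y z : Fin n → ℝ} {r : ℝ} (hr : 0 ≤ r) (hy : ∀ i, 0 < y i)
    (hey : y ᵥ* S = r • y) (hez : z ᵥ* S = r • z) : ∃ t : ℝ, z = t • y := by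
  have hne : (Finset.univ : Finset (Fin n)).Nonempty := ⟨⟨0, by omega⟩, Finset.mem_univ _⟩
  obtain ⟨i0, _, hmin⟩ := Finset.exists_min_image Finset.univ (fun i => z i / y i) hne
  set t := z i0 / y i0 with ht
  refine ⟨t, ?_⟩
  set u := z - t • y with hu
  have hu_eig : u ᵥ* S = r • u := by
    rw [hu, Matrix.sub_vecMul, Matrix.smul_vecMul, hey, hez, smul_sub, smul_comm]
  have hu_nonneg : ∀ i, 0 ≤ u i := by
    intro i
    have h1 : t ≤ z i / y i := hmin i (Finset.mem_univ i)
    have h2 : t * y i ≤ z i := (le_div_iff₀ (hy i)).mp h1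
    simpa [hu, sub_nonneg] using h2
  have hu_i0 : u i0 = 0 := by
    simp only [hu, Pi.sub_apply, Pi.smul_apply, smul_eq_mul, ht]
    rw [div_mul_cancel₀ _ (hy i0).ne', sub_self]
  by_contra hne'
  have hune : u ≠ 0 := fun h => hne' (sub_eq_zero.mp h)
  obtain ⟨-, hpos⟩ := eigen_pos hS hirr hr hu_nonneg hune hu_eig
  exact absurd hu_i0 (ne_of_gt (hpos i0))

lemma exists_perron_left (hn : 1 ≤ n) {S : Matrix (Fin n) (Fin n) ℝ}
    (hS : ∀ i j, 0 ≤ S i j)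
    (hirr : ∀ i j, ∃ m : ℕ, 0 < m ∧ 0 < (S ^ m) i j) :
    ∃ r : ℝ, 0 ≤ r ∧ ∃ y : Fin n → ℝ, (∀ i, 0 < y i) ∧ y ᵥ* S = r • y := by
  have hnn : (n : ℝ) ≠ 0 := Nat.cast_ne_zero.mpr (by omega)
  have hne : (Finset.univ : Finset (Fin n)).Nonempty := ⟨⟨0, by omega⟩, Finset.mem_univ _⟩
  set C : Set ℝ :=
    {c | ∃ x : Fin n → ℝ, (∀ i, 0 ≤ x i) ∧ (∑ i, x i) = 1 ∧ ∀ j, c * x j ≤ (x ᵥ* S) j} with hC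
  have h0C : (0 : ℝ) ∈ C := by
    refine ⟨fun _ => (n : ℝ)⁻¹, fun i => by positivity, ?_, fun j => ?_⟩
    · simp [Finset.sum_const, Finset.card_univ, nsmul_eq_mul, mul_inv_cancel₀ hnn]
    · simpa using vecMul_entry_nonneg S hS _ (fun i => by positivity) j
  have hCbdd : BddAbove C := by
    refine ⟨∑ i, ∑ j, S i j, fun c hc => ?_⟩
    obtain ⟨x, hx0, hx1, hxc⟩ := hc
    have hxle1 : ∀ i, x i ≤ 1 := by
      intro i
      calc x i ≤ ∑ i, x i := Finset.single_le_sum (fun l _ => hx0 l) (Finset.mem_univ i)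
      _ = 1 := hx1
    calc c = c * ∑ j, x j := by rw [hx1, mul_one]
      _ = ∑ j, c * x j := by rw [Finset.mul_sum]
      _ ≤ ∑ j, (x ᵥ* S) j := Finset.sum_le_sum fun j _ => hxc j
      _ = ∑ i, x i * ∑ j, S i j := by
          simp only [Matrix.vecMul, dotProduct, Finset.mul_sum]
          rw [Finset.sum_comm]
      _ ≤ ∑ i, 1 * ∑ j, S i j := Finset.sum_le_sum fun i _ =>
          mul_le_mul_of_nonneg_right (hxle1 i) (Finset.sum_nonneg fun j _ => hS i j)
      _ = ∑ i, ∑ j, S i j := by simp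
  set r := sSup C with hr
  have hr0 : 0 ≤ r := le_csSup hCbdd h0C
  -- the compact sets
  set K : ℝ → Set (Fin n → ℝ) := fun c =>
    {x | (∀ i, 0 ≤ x i) ∧ (∑ i, x i) = 1 ∧ ∀ j, c * x j ≤ (x ᵥ* S) j} with hK
  have hc2 : ∀ j, Continuous fun x : Fin n → ℝ => (x ᵥ* S) j := fun j =>
    (continuous_apply j).comp (Continuous.matrix_vecMul continuous_id continuous_const)
  have hKclosed : ∀ c, IsClosed (K c) := by
    intro c
    have : K c = (⋂ i, {x : Fin n → ℝ | 0 ≤ x i}) ∩ ({x | (∑ i, x i) = 1} ∩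
        ⋂ j, {x : Fin n → ℝ | c * x j ≤ (x ᵥ* S) j}) := by
      ext x
      simp only [hK, Set.mem_setOf_eq, Set.mem_inter_iff, Set.mem_iInter]
    rw [this]
    exact (isClosed_iInter fun i => isClosed_le continuous_const (continuous_apply i)).inter
      (((isClosed_eq (by continuity) continuous_const)).inter
        (isClosed_iInter fun j =>
          isClosed_le (continuous_const.mul (continuous_apply j)) (hc2 j)))
  have hKcompact : ∀ c, IsCompact (K c) := by
    intro c
    refine Metric.isCompact_of_isClosed_isBounded (hKclosed c) ?_
    refine (Metric.isBounded_closedBall (x := (0 : Fin n → ℝ)) (r := 1)).subset ?_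
    intro x hx
    simp only [Metric.mem_closedBall, dist_zero_right]
    refine (pi_norm_le_iff_of_nonneg zero_le_one).mpr fun i => ?_
    rw [Real.norm_eq_abs, abs_of_nonneg (hx.1 i)]
    calc x i ≤ ∑ l, x l := Finset.single_le_sum (fun l _ => hx.1 l) (Finset.mem_univ i)
      _ = 1 := hx.2.1
  have hKanti : ∀ c c' : ℝ, c ≤ c' → K c' ⊆ K c := by
    intro c c' hcc x hx
    exact ⟨hx.1, hx.2.1, fun j =>
      le_trans (mul_le_mul_of_nonneg_right hcc (hx.1 j)) (hx.2.2 j)⟩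
  have hCne : Nonempty C := ⟨⟨0, h0C⟩⟩
  have hinter : (⋂ c : C, K c.1).Nonempty := by
    refine IsCompact.nonempty_iInter_of_directed_nonempty_isCompact_isClosed _ ?_ ?_
      (fun c => hKcompact c.1) (fun c => hKclosed c.1)
    · rintro ⟨c₁, hc₁⟩ ⟨c₂, hc₂⟩
      rcases le_total c₁ c₂ with h | h
      · exact ⟨⟨c₂, hc₂⟩, hKanti _ _ h, subset_rfl⟩
      · exact ⟨⟨c₁, hc₁⟩, subset_rfl, hKanti _ _ h⟩
    · rintro ⟨c, hc⟩
      obtain ⟨x, hx0, hx1, hxc⟩ := hc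
      exact ⟨x, hx0, hx1, hxc⟩
  obtain ⟨y, hy⟩ := hinter
  simp only [Set.mem_iInter] at hy
  have hy0 : ∀ i, 0 ≤ y i := (hy ⟨0, h0C⟩).1
  have hy1 : (∑ i, y i) = 1 := (hy ⟨0, h0C⟩).2.1
  have hyne : y ≠ 0 := by
    intro h
    rw [h] at hy1; simp at hy1
  -- r y ≤ y S entrywise
  have hsub : ∀ j, r * y j ≤ (y ᵥ* S) j := by
    intro j
    rcases (hy0 j).lt_or_eq with h | h
    · rw [hr]
      rw [← le_div_iff₀ h]
      refine csSup_le ⟨0, h0C⟩ fun c hc => ?_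
      rw [le_div_iff₀ h]
      exact (hy ⟨c, hc⟩).2.2 j
    · rw [← h, mul_zero]
      exact vecMul_entry_nonneg S hS y hy0 j
  -- exactness
  have hexact : y ᵥ* S = r • y := by
    by_contra hd
    set d : Fin n → ℝ := y ᵥ* S - r • y with hdd
    have hd0 : ∀ j, 0 ≤ d j := fun j => by
      simp only [hdd, Pi.sub_apply, Pi.smul_apply, smul_eq_mul, sub_nonneg]; exact hsub j
    have hdne : d ≠ 0 := fun h => hd (by rwa [hdd, sub_eq_zero] at h)
    -- positive matrix P
    choose m hm hmpos using hirr
    set N := Finset.sup Finset.univ (fun p : Fin n × Fin n => m p.1 p.2) with hN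
    set P : Matrix (Fin n) (Fin n) ℝ := ∑ l ∈ Finset.Icc 1 N, S ^ l with hP
    have hPpos : ∀ i j, 0 < P i j := by
      intro i j
      have hmem : m i j ∈ Finset.Icc 1 N := by
        rw [Finset.mem_Icc]
        exact ⟨hm i j, Finset.le_sup (f := fun p : Fin n × Fin n => m p.1 p.2)
          (Finset.mem_univ (i, j))⟩
      have : P i j = ∑ l ∈ Finset.Icc 1 N, (S ^ l) i j := by
        simp [hP, Matrix.sum_apply]
      rw [this]
      refine Finset.sum_pos' (fun l _ => pow_entry_nonneg S hS l i j) ⟨m i j, hmem, hmpos i j⟩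
    have hPS : P * S = S * P := by
      simp only [hP, Finset.sum_mul, Finset.mul_sum]
      refine Finset.sum_congr rfl fun l _ => ?_
      rw [← pow_succ, ← pow_succ']
    -- z = y P is positive
    set z : Fin n → ℝ := y ᵥ* P with hz
    have hupos : ∀ (u : Fin n → ℝ), (∀ i, 0 ≤ u i) → u ≠ 0 → ∀ j, 0 < (u ᵥ* P) j := by
      intro u hu hune j
      obtain ⟨i, hi⟩ := exists_pos_entry hu hune
      rw [Matrix.vecMul, dotProduct]
      exact Finset.sum_pos' (fun l _ => mul_nonneg (hu l) (hPpos l j).le)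
        ⟨i, Finset.mem_univ i, mul_pos hi (hPpos i j)⟩
    have hzpos : ∀ j, 0 < z j := hupos y hy0 hyne
    have hzS : z ᵥ* S = r • z + d ᵥ* P := by
      rw [hz, Matrix.vecMul_vecMul, hPS, ← Matrix.vecMul_vecMul]
      have h4 : y ᵥ* S = r • y + d := by rw [hdd]; abel
      rw [h4, Matrix.add_vecMul, Matrix.smul_vecMul]
    have hdPpos : ∀ j, 0 < (d ᵥ* P) j := hupos d hd0 hdne
    -- epsilon
    obtain ⟨j0, _, hj0⟩ := Finset.exists_min_image Finset.univ
      (fun j => (d ᵥ* P) j / z j) hne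
    set ε := (d ᵥ* P) j0 / z j0 with hε
    have hεpos : 0 < ε := div_pos (hdPpos j0) (hzpos j0)
    have hεz : ∀ j, ε * z j ≤ (d ᵥ* P) j := by
      intro j
      exact (le_div_iff₀ (hzpos j)).mp (hj0 j (Finset.mem_univ j))
    -- contradiction with sSup
    have hs : 0 < ∑ i, z i := Finset.sum_pos (fun i _ => hzpos i) hne
    have hCmem : r + ε ∈ C := by
      refine ⟨(∑ i, z i)⁻¹ • z, fun i => mul_nonneg (by positivity) (hzpos i).le, ?_, fun j => ?_⟩
      · simp only [Pi.smul_apply, smul_eq_mul, ← Finset.mul_sum]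
        exact inv_mul_cancel₀ hs.ne'
      · rw [Matrix.smul_vecMul]
        simp only [Pi.smul_apply, smul_eq_mul]
        have h1 : (r + ε) * z j ≤ (z ᵥ* S) j := by
          rw [hzS]
          simp only [Pi.add_apply, Pi.smul_apply, smul_eq_mul]
          nlinarith [hεz j]
        have h2 : (0:ℝ) < (∑ i, z i)⁻¹ := by positivity
        calc (r + ε) * ((∑ i, z i)⁻¹ * z j) = (∑ i, z i)⁻¹ * ((r + ε) * z j) := by ring
          _ ≤ (∑ i, z i)⁻¹ * (z ᵥ* S) j := by nlinarith
    have := le_csSup hCbdd hCmem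
    linarith
  exact ⟨r, hr0, y, (eigen_pos hS hirr hr0 hy0 hyne hexact).2, hexact⟩

lemma charpoly_eval {K : Type*} [Field K] [DecidableEq K] (M : Matrix (Fin n) (Fin n) K) (μ : K) :
    M.charpoly.eval μ = (Matrix.diagonal (fun _ => μ) - M).det := by
  rw [Matrix.charpoly, ← Polynomial.coe_evalRingHom, RingHom.map_det]
  congr 1
  ext i j
  simp only [RingHom.mapMatrix_apply, Matrix.map_apply, Matrix.charmatrix_apply, Matrix.diagonal_apply, Matrix.sub_apply,
    Polynomial.coe_evalRingHom]
  split_ifs with h <;> simp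

lemma isRoot_charpoly_iff_right {K : Type*} [Field K] [DecidableEq K]
    (M : Matrix (Fin n) (Fin n) K) (μ : K) :
    M.charpoly.IsRoot μ ↔ ∃ v, v ≠ 0 ∧ M *ᵥ v = μ • v := by
  rw [Polynomial.IsRoot, charpoly_eval, ← Matrix.exists_mulVec_eq_zero_iff]
  have hdiag : ∀ v : Fin n → K, (Matrix.diagonal (fun _ : Fin n => μ)) *ᵥ v = μ • v := by
    intro v; ext i; rw [Matrix.mulVec_diagonal]; simp
  constructor
  · rintro ⟨v, hv, hMv⟩
    refine ⟨v, hv, ?_⟩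
    rw [Matrix.sub_mulVec, hdiag, sub_eq_zero] at hMv
    exact hMv.symm
  · rintro ⟨v, hv, hMv⟩
    exact ⟨v, hv, by rw [Matrix.sub_mulVec, hdiag, hMv, sub_self]⟩

lemma isRoot_charpoly_of_left {K : Type*} [Field K] [DecidableEq K]
    (M : Matrix (Fin n) (Fin n) K) (μ : K) (v : Fin n → K) (hv : v ≠ 0)
    (hMv : v ᵥ* M = μ • v) : M.charpoly.IsRoot μ := by
  rw [Polynomial.IsRoot, charpoly_eval, ← Matrix.exists_vecMul_eq_zero_iff]
  refine ⟨v, hv, ?_⟩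
  have hdiag : v ᵥ* (Matrix.diagonal (fun _ : Fin n => μ)) = μ • v := by
    ext i; rw [Matrix.vecMul_diagonal]; simp [mul_comm]
  rw [Matrix.vecMul_sub, hdiag, hMv, sub_self]

lemma abs_le_perron {S : Matrix (Fin n) (Fin n) ℝ} (hS : ∀ i j, 0 ≤ S i j)
    {y : Fin n → ℝ} {r : ℝ} (hy : ∀ i, 0 < y i) (hey : y ᵥ* S = r • y)
    (ν : ℂ) (v : Fin n → ℂ) (hv : v ≠ 0) (hMv : (S.map Complex.ofReal) *ᵥ v = ν • v) :
    ‖ν‖ ≤ r := by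
  set a : Fin n → ℝ := fun j => ‖v j‖ with ha
  have ha0 : ∀ j, 0 ≤ a j := fun j => norm_nonneg _
  have hane : ∃ j, 0 < a j := by
    by_contra h
    push_neg at h
    refine hv (funext fun j => ?_)
    have h2 := le_antisymm (h j) (ha0 j)
    exact norm_eq_zero.mp h2
  have key : ∀ j, ‖ν‖ * a j ≤ ∑ l, S j l * a l := by
    intro j
    have h1 : ((S.map Complex.ofReal) *ᵥ v) j = ∑ l, (S j l : ℂ) * v l := by
      simp [Matrix.mulVec, dotProduct, Matrix.map_apply]
    have h2 : ‖ν * v j‖ = ‖ν‖ * a j := by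
      rw [norm_mul]
    calc ‖ν‖ * a j = ‖((S.map Complex.ofReal) *ᵥ v) j‖ := by
          rw [hMv]; simp [h2, ha]
      _ = ‖∑ l, (S j l : ℂ) * v l‖ := by rw [h1]
      _ ≤ ∑ l, ‖(S j l : ℂ) * v l‖ := norm_sum_le _ _
      _ = ∑ l, S j l * a l := by
          refine Finset.sum_congr rfl fun l _ => ?_
          rw [norm_mul, Complex.norm_real, Real.norm_eq_abs, abs_of_nonneg (hS j l)]
  have h3 : ∑ j, y j * (‖ν‖ * a j) ≤ ∑ j, y j * ∑ l, S j l * a l :=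
    Finset.sum_le_sum fun j _ => mul_le_mul_of_nonneg_left (key j) (hy j).le
  have h4 : ∑ j, y j * ∑ l, S j l * a l = ∑ l, (y ᵥ* S) l * a l := by
    simp only [Matrix.vecMul, dotProduct, Finset.mul_sum, Finset.sum_mul]
    rw [Finset.sum_comm]
    exact Finset.sum_congr rfl fun l _ => Finset.sum_congr rfl fun j _ => by ring
  have h5 : ∑ l, (y ᵥ* S) l * a l = r * ∑ l, y l * a l := by
    rw [hey, Finset.mul_sum]
    exact Finset.sum_congr rfl fun l _ => by simp only [Pi.smul_apply, smul_eq_mul]; ring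
  have ht : 0 < ∑ l, y l * a l := by
    obtain ⟨j, hj⟩ := hane
    exact Finset.sum_pos' (fun l _ => mul_nonneg (hy l).le (ha0 l))
      ⟨j, Finset.mem_univ j, mul_pos (hy j) hj⟩
  have h6 : ‖ν‖ * ∑ l, y l * a l ≤ r * ∑ l, y l * a l := by
    calc ‖ν‖ * ∑ l, y l * a l = ∑ j, y j * (‖ν‖ * a j) := by
          rw [Finset.mul_sum]; exact Finset.sum_congr rfl fun l _ => by ring
      _ ≤ ∑ j, y j * ∑ l, S j l * a l := h3
      _ = r * ∑ l, y l * a l := by rw [h4, h5]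
  exact le_of_mul_le_mul_right h6 ht

lemma mulVec_pow_eigen {A : Matrix (Fin n) (Fin n) ℂ} {v : Fin n → ℂ} {μ : ℂ}
    (h : A *ᵥ v = μ • v) : ∀ m : ℕ, (A ^ m) *ᵥ v = μ ^ m • v := by
  intro m
  induction m with
  | zero => simp
  | succ m ih =>
      rw [pow_succ, ← Matrix.mulVec_mulVec, h, Matrix.mulVec_smul, ih, smul_smul, pow_succ]
      ring_nf

end PFAux

theorem PFAux.main_aux
    (n : ℕ) (hn : 1 ≤ n) (T : Matrix (Fin n) (Fin n) ℝ)
    (hcol : ∀ j, 0 < ∑ i, T i j)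
    (hpow : ∃ k : ℕ, 0 < k ∧ (∀ i j, 0 ≤ (T ^ k) i j) ∧
      (∀ i j, ∃ m : ℕ, 0 < m ∧ 0 < ((T ^ k) ^ m) i j))
    (ρ : ℝ)
    (hρ : IsGreatest {x : ℝ | ∃ μ : ℂ,
      (T.map Complex.ofReal).charpoly.IsRoot μ ∧ ‖μ‖ = x} ρ) :
    ∃ x : Fin n → ℝ, x ≠ 0 ∧ (∀ i, 0 ≤ x i) ∧ Matrix.vecMul x T = ρ • x := by
  classical
  obtain ⟨k, hk, hSnn, hSirr⟩ := hpow
  set S := T ^ k with hSdef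
  have hne : (Finset.univ : Finset (Fin n)).Nonempty := ⟨⟨0, by omega⟩, Finset.mem_univ _⟩
  obtain ⟨r, hr0, y, hy, hey⟩ := PFAux.exists_perron_left hn hSnn hSirr
  -- transpose version
  have hSTnn : ∀ i j, 0 ≤ Sᵀ i j := fun i j => hSnn j i
  have hSTirr : ∀ i j, ∃ m : ℕ, 0 < m ∧ 0 < (Sᵀ ^ m) i j := by
    intro i j
    obtain ⟨m, hm, h⟩ := hSirr j i
    refine ⟨m, hm, ?_⟩
    rw [← Matrix.transpose_pow, Matrix.transpose_apply]
    exact h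
  obtain ⟨r', hr'0, w, hw, hew⟩ := PFAux.exists_perron_left hn hSTnn hSTirr
  have hew' : S *ᵥ w = r' • w := by rwa [Matrix.vecMul_transpose] at hew
  have hyw : (0:ℝ) < y ⬝ᵥ w := by
    rw [dotProduct]
    exact Finset.sum_pos (fun i _ => mul_pos (hy i) (hw i)) hne
  have hr_eq : r = r' := by
    have h1 : (y ᵥ* S) ⬝ᵥ w = r * (y ⬝ᵥ w) := by rw [hey, smul_dotProduct, smul_eq_mul]
    have h2 : y ⬝ᵥ (S *ᵥ w) = r' * (y ⬝ᵥ w) := by rw [hew', dotProduct_smul, smul_eq_mul]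
    have h3 := dotProduct_mulVec y S w
    rw [h2, h1] at h3
    exact mul_right_cancel₀ hyw.ne' h3.symm
  -- yT is an eigenvector of S
  have hcomm : T * S = S * T := ((Commute.refl T).pow_right k).eq
  have hzS : (y ᵥ* T) ᵥ* S = r • (y ᵥ* T) := by
    rw [Matrix.vecMul_vecMul, hcomm, ← Matrix.vecMul_vecMul, hey, Matrix.smul_vecMul]
  obtain ⟨t, hzy⟩ := PFAux.simplicity hn hSnn hSirr hr0 hy hey hzS
  -- Tw is an eigenvector of Sᵀ
  have huS : (T *ᵥ w) ᵥ* Sᵀ = r • (T *ᵥ w) := by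
    rw [Matrix.vecMul_transpose, Matrix.mulVec_mulVec, ← hcomm, ← Matrix.mulVec_mulVec, hew',
      Matrix.mulVec_smul, hr_eq]
  have hew2 : w ᵥ* Sᵀ = r • w := by rw [hr_eq]; exact hew
  obtain ⟨t', hws⟩ := PFAux.simplicity hn hSTnn hSTirr hr0 hw hew2 huS
  -- t = t'
  have htt : t = t' := by
    have h1 : (y ᵥ* T) ⬝ᵥ w = t * (y ⬝ᵥ w) := by rw [hzy, smul_dotProduct, smul_eq_mul]
    have h2 : y ⬝ᵥ (T *ᵥ w) = t' * (y ⬝ᵥ w) := by rw [hws, dotProduct_smul, smul_eq_mul]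
    have h3 := dotProduct_mulVec y T w
    rw [h2, h1] at h3
    exact (mul_right_cancel₀ hyw.ne' h3).symm
  -- t > 0 using column sums
  have htpos : 0 < t := by
    have h1 : ∑ i, (T *ᵥ w) i = ∑ j, (∑ i, T i j) * w j := by
      simp only [Matrix.mulVec, dotProduct, Finset.sum_mul]
      rw [Finset.sum_comm]
    have h2 : 0 < ∑ j, (∑ i, T i j) * w j :=
      Finset.sum_pos (fun j _ => mul_pos (hcol j) (hw j)) hne
    have h3 : ∑ i, (T *ᵥ w) i = t * ∑ i, w i := by
      rw [hws, ← htt]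
      simp only [Pi.smul_apply, smul_eq_mul]
      rw [Finset.mul_sum]
    have h4 : 0 < ∑ i, w i := Finset.sum_pos (fun i _ => hw i) hne
    rw [h1] at h3
    nlinarith
  -- t ^ k = r
  have htk : t ^ k = r := by
    have h1 : y ᵥ* S = t ^ k • y := by
      rw [hSdef]
      exact PFAux.vecMul_pow_eigen hzy k
    rw [hey] at h1
    have h2 := congrFun h1 ⟨0, by omega⟩
    simp only [Pi.smul_apply, smul_eq_mul] at h2
    exact (mul_right_cancel₀ (hy ⟨0, by omega⟩).ne' h2).symm
  have hyne : y ≠ 0 := by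
    intro h
    have h0 := congrFun h ⟨0, by omega⟩
    simp only [Pi.zero_apply] at h0
    exact absurd h0 (hy ⟨0, by omega⟩).ne'
  -- t ≤ ρ
  have htρ : t ≤ ρ := by
    have hroot : T.charpoly.IsRoot t := PFAux.isRoot_charpoly_of_left T t y hyne hzy
    have hrootC : (T.map Complex.ofReal).charpoly.IsRoot (t : ℂ) := by
      have hmap : (T.map Complex.ofReal).charpoly = T.charpoly.map Complex.ofRealHom := by
        rw [← Matrix.charpoly_map]
        rfl
      rw [Polynomial.IsRoot, hmap]
      have : (t : ℂ) = Complex.ofRealHom t := rfl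
      rw [this, Polynomial.eval_map, Polynomial.eval₂_at_apply, hroot.eq_zero, map_zero]
    have : t ∈ {x : ℝ | ∃ μ : ℂ,
        (T.map Complex.ofReal).charpoly.IsRoot μ ∧ ‖μ‖ = x} :=
      ⟨(t : ℂ), hrootC, by rw [Complex.norm_real, Real.norm_eq_abs, abs_of_pos htpos]⟩
    exact hρ.2 this
  -- ρ ≤ t
  have hρt : ρ ≤ t := by
    obtain ⟨μ, hroot, habs⟩ := hρ.1
    obtain ⟨v, hv, hMv⟩ := (PFAux.isRoot_charpoly_iff_right (T.map Complex.ofReal) μ).mp hroot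
    have hSv : (S.map Complex.ofReal) *ᵥ v = (μ ^ k) • v := by
      have h1 : (T.map Complex.ofReal) ^ k = S.map Complex.ofReal := by
        rw [hSdef]
        have h0 := map_pow (Complex.ofRealHom.mapMatrix :
          Matrix (Fin n) (Fin n) ℝ →+* Matrix (Fin n) (Fin n) ℂ) T k
        exact h0.symm
      rw [← h1]
      exact PFAux.mulVec_pow_eigen hMv k
    have h2 : ‖μ ^ k‖ ≤ r := PFAux.abs_le_perron hSnn hy hey _ v hv hSv
    rw [norm_pow, habs] at h2
    have hρ0 : 0 ≤ ρ := habs ▸ norm_nonneg μ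
    rw [← htk] at h2
    exact (pow_le_pow_iff_left₀ hρ0 htpos.le (by omega)).mp h2
  have : t = ρ := le_antisymm htρ hρt
  exact ⟨y, hyne, fun i => (hy i).le, by rw [hzy, this]⟩


/-- Let `T` be an `n × n` real matrix (`n ≥ 1`) such that
(1) every column sum of `T` is positive, and
(2) there is a positive integer `k` with `T ^ k` entrywise nonnegative and irreducible.
Then there exists a nonzero nonnegative row vector `x` with `x T = ρ(T) x`,
where `ρ(T)` is the spectral radius of `T`. -/
theorem generalized_perron_frobenius_nonneg_left_eigenvector
    (n : ℕ) (hn : 1 ≤ n) (T : Matrix (Fin n) (Fin n) ℝ)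
    (hcol : ∀ j, 0 < ∑ i, T i j)
    (hpow : ∃ k : ℕ, 0 < k ∧ (∀ i j, 0 ≤ (T ^ k) i j) ∧
      (∀ i j, ∃ m : ℕ, 0 < m ∧ 0 < ((T ^ k) ^ m) i j))
    (ρ : ℝ)
    (hρ : IsGreatest {x : ℝ | ∃ μ : ℂ,
      (T.map Complex.ofReal).charpoly.IsRoot μ ∧ ‖μ‖ = x} ρ) :
    ∃ x : Fin n → ℝ, x ≠ 0 ∧ (∀ i, 0 ≤ x i) ∧ Matrix.vecMul x T = ρ • x := by
  exact PFAux.main_aux n hn T hcol hpow ρ hρ
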